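/- Let V be an infinite-dimensional vector space over a field F. Then [I_{ℵ₀}, gl(V)] = [I_{ℵ₀}, I_{ℵ₀}]: the span of commutators of a finite-rank endomorphism with an arbitrary endomorphism equals the span of commutators of two finite-rank endomorphisms. -/

import Mathlib

open Cardinal

/-- `[I_{ℵ₀}, gl(V)] = [I_{ℵ₀}, I_{ℵ₀}]`: the span of commutators of a finite-rank endomorphism
with an arbitrary endomorphism equals the span of commutators of two finite-rank
endomorphisms. -/
theorem commutator_span_finite_rank (F V : Type*) [Field F] [AddCommGroup V] [Module F V]
    (hV : ℵ₀ ≤ Module.rank F V) :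
    Submodule.span F {x : Module.End F V | ∃ φ ψ : Module.End F V,
        LinearMap.rank φ < ℵ₀ ∧ x = φ * ψ - ψ * φ} =
      Submodule.span F {x : Module.End F V | ∃ φ ψ : Module.End F V,
        LinearMap.rank φ < ℵ₀ ∧ LinearMap.rank ψ < ℵ₀ ∧ x = φ * ψ - ψ * φ} := by
  apply le_antisymm
  · rw [Submodule.span_le]
    rintro x ⟨φ, ψ, hφ, rfl⟩
    -- complements
    obtain ⟨C, hC⟩ := Submodule.exists_isCompl (LinearMap.range φ)
    obtain ⟨U, hU⟩ := Submodule.exists_isCompl (LinearMap.ker φ)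
    -- hU : IsCompl (ker φ) U
    set π₁ : Module.End F V :=
      (LinearMap.range φ).subtype ∘ₗ (LinearMap.range φ).linearProjOfIsCompl C hC with hπ₁def
    set π₂ : Module.End F V :=
      U.subtype ∘ₗ U.linearProjOfIsCompl (LinearMap.ker φ) hU.symm with hπ₂def
    have hπ₁rank : LinearMap.rank π₁ < ℵ₀ := by
      refine lt_of_le_of_lt (LinearMap.rank_comp_le_left _ _) ?_
      rwa [LinearMap.rank, Submodule.range_subtype]
    have hUrank : Module.rank F U < ℵ₀ := by
      have e1 := (Submodule.quotientEquivOfIsCompl (LinearMap.ker φ) U hU).rank_eq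
      have e2 := φ.quotKerEquivRange.rank_eq
      rw [← e1, e2]
      exact hφ
    have hπ₂rank : LinearMap.rank π₂ < ℵ₀ := by
      refine lt_of_le_of_lt (LinearMap.rank_comp_le_left _ _) ?_
      rwa [LinearMap.rank, Submodule.range_subtype]
    -- π₁ ∘ φ = φ
    have hπ₁φ : π₁ * φ = φ := by
      ext v
      have : φ v ∈ LinearMap.range φ := ⟨v, rfl⟩
      simp [hπ₁def, Module.End.mul_apply,
        Submodule.projectionOnto_apply_left hC ⟨φ v, this⟩]
      exact congrArg Subtype.val (Submodule.projectionOnto_apply_left hC ⟨φ v, this⟩)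
    -- φ ∘ π₂ = φ
    have hφπ₂ : φ * π₂ = φ := by
      ext v
      have hsum : ((U.linearProjOfIsCompl (LinearMap.ker φ) hU.symm v : V)) +
          (((LinearMap.ker φ).linearProjOfIsCompl U hU.symm.symm) v : V) = v :=
        Submodule.projection_add_projection_eq_self hU.symm v
      have hker : (((LinearMap.ker φ).linearProjOfIsCompl U hU.symm.symm) v : V)
          ∈ LinearMap.ker φ := Submodule.coe_mem _
      have : φ ((U.linearProjOfIsCompl (LinearMap.ker φ) hU.symm v : V)) = φ v := by
        conv_rhs => rw [← hsum]
        rw [map_add, LinearMap.mem_ker.mp hker, add_zero]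
      simpa [hπ₂def, Module.End.mul_apply] using this
    -- the key identity
    have key : φ * ψ - ψ * φ =
        (φ * (π₂ * ψ * π₁) - (π₂ * ψ * π₁) * φ)
          + (π₁ * (φ * ψ) - (φ * ψ) * π₁)
          + (π₂ * (ψ * φ) - (ψ * φ) * π₂) := by
      have e1 : φ * (π₂ * ψ * π₁) = φ * ψ * π₁ := by
        rw [show φ * (π₂ * ψ * π₁) = (φ * π₂) * ψ * π₁ by noncomm_ring, hφπ₂]
      have e2 : (π₂ * ψ * π₁) * φ = π₂ * (ψ * φ) := by
        rw [show (π₂ * ψ * π₁) * φ = π₂ * ψ * (π₁ * φ) by noncomm_ring, hπ₁φ]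
        noncomm_ring
      have e3 : π₁ * (φ * ψ) = φ * ψ := by
        rw [← mul_assoc, hπ₁φ]
      have e4 : (ψ * φ) * π₂ = ψ * φ := by
        rw [mul_assoc, hφπ₂]
      rw [e1, e2, e3, e4]
      abel
    rw [key]
    have mem1 : (φ * (π₂ * ψ * π₁) - (π₂ * ψ * π₁) * φ) ∈
        Submodule.span F {x : Module.End F V | ∃ φ ψ : Module.End F V,
          LinearMap.rank φ < ℵ₀ ∧ LinearMap.rank ψ < ℵ₀ ∧ x = φ * ψ - ψ * φ} := by
      refine Submodule.subset_span ⟨φ, π₂ * ψ * π₁, hφ, ?_, rfl⟩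
      exact lt_of_le_of_lt (LinearMap.rank_comp_le_right _ _) hπ₁rank
    have mem2 : (π₁ * (φ * ψ) - (φ * ψ) * π₁) ∈
        Submodule.span F {x : Module.End F V | ∃ φ ψ : Module.End F V,
          LinearMap.rank φ < ℵ₀ ∧ LinearMap.rank ψ < ℵ₀ ∧ x = φ * ψ - ψ * φ} := by
      refine Submodule.subset_span ⟨π₁, φ * ψ, hπ₁rank, ?_, rfl⟩
      exact lt_of_le_of_lt (LinearMap.rank_comp_le_left _ _) hφ
    have mem3 : (π₂ * (ψ * φ) - (ψ * φ) * π₂) ∈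
        Submodule.span F {x : Module.End F V | ∃ φ ψ : Module.End F V,
          LinearMap.rank φ < ℵ₀ ∧ LinearMap.rank ψ < ℵ₀ ∧ x = φ * ψ - ψ * φ} := by
      refine Submodule.subset_span ⟨π₂, ψ * φ, hπ₂rank, ?_, rfl⟩
      exact lt_of_le_of_lt (LinearMap.rank_comp_le_right _ _) hφ
    exact add_mem (add_mem mem1 mem2) mem3
  · apply Submodule.span_mono
    rintro x ⟨φ, ψ, hφ, _, rfl⟩
    exact ⟨φ, ψ, hφ, rfl⟩
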